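/- arXiv:2203.15017 — 5 statements merged into one kernel-verified Lean document; each statement's English description precedes it below -/
import Mathlib

section
/- Let S = k[x₁, x₂] be a polynomial ring over a field k and let f ∈ (x₁, x₂). Let D_f = S⁴ with endomorphism given by the matrix with rows (0, x₁, x₂, f), (0, 0, 0, −x₂), (0, 0, 0, x₁), (0, 0, 0, 0), and let D₀ be the same with f = 0. Then d_f² = 0 and D_f is isomorphic as a differential module to D₀. -/
open MvPolynomial

/-- The matrix `D_f` with rows `(0, x₁, x₂, f)`, `(0, 0, 0, −x₂)`, `(0, 0, 0, x₁)`,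
`(0, 0, 0, 0)` over `S = k[x₁, x₂]`. -/
noncomputable def Dmat {k : Type} [Field k] (f : MvPolynomial (Fin 2) k) :
    Matrix (Fin 4) (Fin 4) (MvPolynomial (Fin 2) k) :=
  !![0, X 0, X 1, f;
     0, 0,   0,   -X 1;
     0, 0,   0,   X 0;
     0, 0,   0,   0]

noncomputable def Pmat {k : Type} [Field k] (a b : MvPolynomial (Fin 2) k) :
    Matrix (Fin 4) (Fin 4) (MvPolynomial (Fin 2) k) :=
  !![1, 0, 0, 0;
     0, 1, 0, a;
     0, 0, 1, b;
     0, 0, 0, 1]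

lemma Pmat_mul {k : Type} [Field k] (a b : MvPolynomial (Fin 2) k) :
    Pmat a b * Pmat (-a) (-b) = 1 := by
  refine Matrix.ext fun i j => ?_
  fin_cases i <;> fin_cases j <;>
    simp [Pmat, Matrix.mul_apply, Fin.sum_univ_four, Matrix.one_apply,
      Matrix.vecHead, Matrix.vecTail]

/-- for `f ∈ (x₁, x₂)`, the endomorphism `d_f` squares to zero and the
differential module `D_f = (S⁴, d_f)` is isomorphic as a differential module to
`D₀` (the same module with `f = 0`). -/
theorem stmt5 (k : Type) [Field k] (f : MvPolynomial (Fin 2) k)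
    (hf : f ∈ Ideal.span {(X 0 : MvPolynomial (Fin 2) k), X 1}) :
    (Matrix.toLin' (Dmat f) ∘ₗ Matrix.toLin' (Dmat f) = 0) ∧
    ∃ φ : (Fin 4 → MvPolynomial (Fin 2) k) ≃ₗ[MvPolynomial (Fin 2) k]
        (Fin 4 → MvPolynomial (Fin 2) k),
      Matrix.toLin' (Dmat (0 : MvPolynomial (Fin 2) k)) ∘ₗ φ.toLinearMap =
        φ.toLinearMap ∘ₗ Matrix.toLin' (Dmat f) := by
  constructor
  · rw [← Matrix.toLin'_mul]
    have : Dmat f * Dmat f = 0 := by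
      refine Matrix.ext fun i j => ?_
      fin_cases i <;> fin_cases j <;>
        simp [Dmat, Matrix.mul_apply, Fin.sum_univ_four,
          Matrix.vecHead, Matrix.vecTail] <;> ring
    rw [this]
    exact LinearMap.ext fun v => by rw [Matrix.toLin'_apply, Matrix.zero_mulVec]; rfl
  · rw [Ideal.mem_span_pair] at hf
    obtain ⟨a, b, hab⟩ := hf
    have h1 : Pmat a b * Pmat (-a) (-b) = 1 := Pmat_mul a b
    have h2 : Pmat (-a) (-b) * Pmat a b = 1 := by
      have := Pmat_mul (-a) (-b); simpa using this
    refine ⟨LinearEquiv.ofLinear (Matrix.toLin' (Pmat a b))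
      (Matrix.toLin' (Pmat (-a) (-b))) ?_ ?_, ?_⟩
    · rw [← Matrix.toLin'_mul, h1, Matrix.toLin'_one]
    · rw [← Matrix.toLin'_mul, h2, Matrix.toLin'_one]
    · show Matrix.toLin' (Dmat 0) ∘ₗ Matrix.toLin' (Pmat a b) =
        Matrix.toLin' (Pmat a b) ∘ₗ Matrix.toLin' (Dmat f)
      rw [← Matrix.toLin'_mul, ← Matrix.toLin'_mul]
      refine congrArg Matrix.toLin' ?_
      refine Matrix.ext fun i j => ?_
      fin_cases i <;> fin_cases j <;>
        simp [Dmat, Pmat, Matrix.mul_apply, Fin.sum_univ_four,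
          Matrix.vecHead, Matrix.vecTail] <;>
        linear_combination hab
end

section
/- Let R be a commutative ring, let (F, d) be a differential module over the polynomial ring R, let S = R[x] be a polynomial extension in one new variable x, and let F' = (F ⊗_R S) ⊕ (F ⊗_R S) with endomorphism d' given in block form by rows (−d⊗S, x·id) and (0, d⊗S). Suppose R = k[x₁,…,x_{n−1}], S = k[x₁,…,x_n], x = x_n, and d is a matrix with entries in R. Then (d')² = 0 and the homology of (F', d') is isomorphic to the homology of (F, d) as an R-module (equivalently ker(d')/im(d') ≅ ker(d)/im(d)). -/
open MvPolynomial Polynomial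

/-- The mapping cone differential: on `(Fin m → S) × (Fin m → S)` the block matrix
with rows `(−A, x·id)` and `(0, A)`, where `A` acts via `Matrix.toLin'`. -/
noncomputable def coneDiff (S : Type*) [CommRing S] {m : ℕ}
    (A : Matrix (Fin m) (Fin m) S) (x : S) :
    ((Fin m → S) × (Fin m → S)) →ₗ[S] (Fin m → S) × (Fin m → S) :=
  LinearMap.prod
    (-(Matrix.toLin' A) ∘ₗ LinearMap.fst S _ _ + x • LinearMap.snd S _ _)
    ((Matrix.toLin' A) ∘ₗ LinearMap.snd S _ _)

/-- The statement that the homologies `ker ⧸ im` of two differential modules over `R`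
are isomorphic as `R`-modules. -/
def HomologyIso {R M N : Type*} [CommRing R] [AddCommGroup M] [Module R M]
    [AddCommGroup N] [Module R N] (dM : M →ₗ[R] M) (dN : N →ₗ[R] N) : Prop :=
  Nonempty ((LinearMap.ker dM ⧸ (LinearMap.range dM).comap (LinearMap.ker dM).subtype)
    ≃ₗ[R] (LinearMap.ker dN ⧸ (LinearMap.range dN).comap (LinearMap.ker dN).subtype))

section Aux

variable {R : Type*} [CommRing R] {m : ℕ}

/-- Evaluation at `0` (i.e. constant coefficient) componentwise, as an `R`-linear map. -/
noncomputable def evMap (R : Type*) [CommRing R] (m : ℕ) :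
    (Fin m → Polynomial R) →ₗ[R] (Fin m → R) :=
  LinearMap.pi fun i => Polynomial.lcoeff R 0 ∘ₗ LinearMap.proj i

lemma evMap_apply (a : Fin m → Polynomial R) (i : Fin m) :
    evMap R m a i = (a i).coeff 0 := rfl

lemma evMap_comm (M : Matrix (Fin m) (Fin m) R) (a : Fin m → Polynomial R) :
    evMap R m (Matrix.toLin' (M.map Polynomial.C) a) = Matrix.toLin' M (evMap R m a) := by
  funext i
  simp [evMap_apply, Matrix.toLin'_apply, Matrix.mulVec, dotProduct,
    Polynomial.finset_sum_coeff, Polynomial.coeff_C_mul]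

lemma toLin'_map_C (M : Matrix (Fin m) (Fin m) R) (v : Fin m → R) :
    Matrix.toLin' (M.map Polynomial.C) (fun i => Polynomial.C (v i))
      = fun i => Polynomial.C (Matrix.toLin' M v i) := by
  funext i
  simp [Matrix.toLin'_apply, Matrix.mulVec, dotProduct, map_sum]

theorem stmt8_aux (R : Type*) [CommRing R] [IsDomain R] (m : ℕ)
    (M : Matrix (Fin m) (Fin m) R) (hM : M * M = 0) :
    (coneDiff (Polynomial R) (M.map Polynomial.C) Polynomial.X ∘ₗ
      coneDiff (Polynomial R) (M.map Polynomial.C) Polynomial.X = 0) ∧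
    HomologyIso
      ((coneDiff (Polynomial R) (M.map Polynomial.C) Polynomial.X).restrictScalars R)
      (Matrix.toLin' M) := by
  set S := Polynomial R
  set A : (Fin m → S) →ₗ[S] (Fin m → S) := Matrix.toLin' (M.map Polynomial.C) with hA
  have hA2 : ∀ v, A (A v) = 0 := by
    intro v
    have : A ∘ₗ A = 0 := by
      rw [hA, ← Matrix.toLin'_mul, ← Matrix.map_mul, hM]
      simp
    exact DFunLike.congr_fun this v
  have hcone : ∀ z : (Fin m → S) × (Fin m → S),
      coneDiff S (M.map Polynomial.C) Polynomial.X z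
        = (-(A z.1) + (Polynomial.X : S) • z.2, A z.2) := by
    intro z
    rfl
  have hsq : coneDiff S (M.map Polynomial.C) Polynomial.X ∘ₗ
      coneDiff S (M.map Polynomial.C) Polynomial.X = 0 := by
    apply LinearMap.ext
    rintro ⟨a, b⟩
    rw [LinearMap.comp_apply, hcone, hcone]
    simp only [LinearMap.zero_apply, Prod.mk_eq_zero]
    constructor
    · rw [map_add, map_neg, hA2, map_smul]
      simp
      exact neg_add_cancel _
    · exact hA2 b
  refine ⟨hsq, ?_⟩
  set d' := (coneDiff S (M.map Polynomial.C) Polynomial.X).restrictScalars R with hd'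
  set D : (Fin m → R) →ₗ[R] (Fin m → R) := Matrix.toLin' M with hD
  have hD2 : ∀ v, D (D v) = 0 := by
    intro v
    rw [hD]
    simp [Matrix.toLin'_apply, Matrix.mulVec_mulVec, hM]
  set N : Submodule R (LinearMap.ker D) :=
    (LinearMap.range D).comap (LinearMap.ker D).subtype with hN
  -- the map g : ker d' → Fin m → R
  set g : (LinearMap.ker d') →ₗ[R] (Fin m → R) :=
    evMap R m ∘ₗ LinearMap.fst R (Fin m → S) (Fin m → S) ∘ₗ (LinearMap.ker d').subtype with hg
  have hgval : ∀ z : LinearMap.ker d', g z = evMap R m (z : (Fin m → S) × (Fin m → S)).1 :=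
    fun _ => rfl
  have hker' : ∀ z : (Fin m → S) × (Fin m → S), z ∈ LinearMap.ker d' ↔
      (A z.1 = (Polynomial.X : S) • z.2 ∧ A z.2 = 0) := by
    intro z
    rw [LinearMap.mem_ker, hd', LinearMap.restrictScalars_apply, hcone]
    constructor
    · intro h
      have h1 := congrArg Prod.fst h
      have h2 := congrArg Prod.snd h
      simp only [Prod.fst_zero, Prod.snd_zero] at h1 h2
      exact ⟨by rwa [neg_add_eq_zero] at h1, h2⟩
    · rintro ⟨h1, h2⟩
      simp [h1, h2]
  have hgmem : ∀ z : LinearMap.ker d', g z ∈ LinearMap.ker D := by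
    rintro ⟨⟨a, b⟩, hz⟩
    obtain ⟨h1, h2⟩ := (hker' _).mp hz
    rw [LinearMap.mem_ker, hgval]
    show Matrix.toLin' M (evMap R m a) = 0
    have heq := congrArg (evMap R m) h1
    rw [evMap_comm] at heq
    rw [heq]
    funext i
    simp [evMap_apply, Pi.smul_apply, smul_eq_mul, Polynomial.mul_coeff_zero,
      Polynomial.coeff_X_zero]
  set f : (LinearMap.ker d') →ₗ[R] ((LinearMap.ker D) ⧸ N) :=
    N.mkQ ∘ₗ LinearMap.codRestrict (LinearMap.ker D) g hgmem with hf
  have hfsurj : Function.Surjective f := by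
    intro q
    obtain ⟨⟨v, hv⟩, rfl⟩ := Submodule.mkQ_surjective N q
    have hv' : Matrix.toLin' M v = 0 := hv
    have hmem : ((fun i => Polynomial.C (v i), 0) : (Fin m → S) × (Fin m → S))
        ∈ LinearMap.ker d' := by
      rw [hker']
      refine ⟨?_, by simp⟩
      simp only [smul_zero]
      rw [hA, toLin'_map_C, hv']
      funext i; simp
    refine ⟨⟨_, hmem⟩, ?_⟩
    rw [hf]
    simp only [LinearMap.comp_apply, Submodule.mkQ_apply]
    congr 1
    apply Subtype.ext
    show g ⟨_, hmem⟩ = v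
    rw [hgval]
    funext i
    simp [evMap_apply]
  have hrange : ∀ z : (Fin m → S) × (Fin m → S), z ∈ LinearMap.ker d' →
      (evMap R m z.1 ∈ LinearMap.range D ↔ z ∈ LinearMap.range d') := by
    rintro ⟨a, b⟩ hz
    obtain ⟨h1, h2⟩ := (hker' _).mp hz
    constructor
    · rintro ⟨u, hu⟩
      -- construct preimage (p, q)
      set p : Fin m → S := fun i => -Polynomial.C (u i) with hp
      set q : Fin m → S := fun i => (a i).divX with hq
      refine ⟨(p, q), ?_⟩
      rw [hd', LinearMap.restrictScalars_apply, hcone]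
      have hAp : A p = fun i => -Polynomial.C ((evMap R m a) i) := by
        have : A (fun i => Polynomial.C (u i)) = fun i => Polynomial.C (D u i) := by
          rw [hA, hD]; exact toLin'_map_C M u
        have hpneg : p = -(fun i => Polynomial.C (u i)) := by funext i; simp [hp]
        rw [hpneg, map_neg, this]
        funext i
        rw [hD] at hu ⊢
        rw [hu]
        simp
      have hfst : -(A p) + (Polynomial.X : S) • q = a := by
        rw [hAp]
        funext i
        simp only [Pi.add_apply, Pi.neg_apply, Pi.smul_apply, hq, smul_eq_mul, neg_neg]
        rw [evMap_apply, add_comm]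
        exact Polynomial.X_mul_divX_add (a i)
      have hsnd : A q = b := by
        -- X • (A q) = X • b, cancel X
        have ha : a = (fun i => Polynomial.C ((evMap R m a) i)) + (Polynomial.X : S) • q := by
          funext i
          simp only [Pi.add_apply, Pi.smul_apply, hq, smul_eq_mul]
          rw [evMap_apply]
          exact (Polynomial.X_mul_divX_add (a i)).symm.trans (by ring)
        have hC0 : A (fun i => Polynomial.C ((evMap R m a) i)) = 0 := by
          have hDev : D (evMap R m a) = 0 := by
            rw [← hu, hD2]
          rw [hA, toLin'_map_C, ← hD, hDev]
          funext i; simp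
        have hXeq : (Polynomial.X : S) • A q = (Polynomial.X : S) • b := by
          have := h1
          rw [ha, map_add, hC0, zero_add, map_smul] at this
          exact this
        funext i
        have := congrFun hXeq i
        simp only [Pi.smul_apply, smul_eq_mul] at this
        exact mul_left_cancel₀ Polynomial.X_ne_zero this
      rw [hfst, hsnd]
    · rintro ⟨⟨p, q⟩, hpq⟩
      rw [hd', LinearMap.restrictScalars_apply, hcone] at hpq
      have h1' : -(A p) + (Polynomial.X : S) • q = a := congrArg Prod.fst hpq
      refine ⟨-(evMap R m p), ?_⟩
      rw [hD, map_neg, ← evMap_comm, ← hA]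
      rw [← h1', map_add, map_neg]
      have : evMap R m ((Polynomial.X : S) • q) = 0 := by
        funext i
        simp [evMap_apply, Polynomial.smul_eq_C_mul]
      rw [this, add_zero]
  have hkerf : LinearMap.ker f = (LinearMap.range d').comap (LinearMap.ker d').subtype := by
    ext z
    rw [LinearMap.mem_ker, hf, Submodule.mem_comap]
    simp only [LinearMap.comp_apply, Submodule.mkQ_apply, Submodule.Quotient.mk_eq_zero]
    rw [hN, Submodule.mem_comap]
    show g z ∈ LinearMap.range D ↔ _
    rw [hgval]
    exact hrange z z.2
  exact ⟨(Submodule.quotEquivOfEq _ _ hkerf.symm).trans (f.quotKerEquivOfSurjective hfsurj)⟩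

end Aux

/-- let `R = k[x₁,…,x_n]`, `S = R[x]` a polynomial extension by one new
variable, `d` a square-zero matrix with entries in `R`, and `F' = (F⊗S) ⊕ (F⊗S)` with
block differential `((−d⊗S, x·id), (0, d⊗S))` (the mapping cone of multiplication by
`x` on `F ⊗_R S`).  Then `d'² = 0` and the homology of `(F', d')` is isomorphic to the
homology of `(F, d)` as an `R`-module. -/
theorem stmt8 (k : Type) [Field k] (n m : ℕ)
    (M : Matrix (Fin m) (Fin m) (MvPolynomial (Fin n) k))
    (hM : M * M = 0) :
    (coneDiff (Polynomial (MvPolynomial (Fin n) k)) (M.map Polynomial.C) Polynomial.X ∘ₗ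
      coneDiff (Polynomial (MvPolynomial (Fin n) k)) (M.map Polynomial.C) Polynomial.X = 0) ∧
    HomologyIso
      ((coneDiff (Polynomial (MvPolynomial (Fin n) k)) (M.map Polynomial.C)
          Polynomial.X).restrictScalars (MvPolynomial (Fin n) k))
      (Matrix.toLin' M) := by
  exact stmt8_aux _ m M hM
end

section
/- For each n ≥ 2 there exists a free differential module D over S = k[x₁,…,x_n] of rank 2^{n−1} whose homology ker(d)/im(d) is isomorphic to k = S/(x₁,…,x_n). (Constructed inductively: for n = 2 take S² with differential matrix rows (x₁x₂, −x₂²), (x₁², −x₁x₂); for the inductive step take the mapping cone of multiplication by x_n on the previous differential module base-changed to k[x₁,…,x_n].) -/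
open MvPolynomial



section Generic
variable {R : Type*} [CommRing R] {M N : Type*} [AddCommGroup M] [Module R M]
  [AddCommGroup N] [Module R N]

/-- Homology of a differential module. -/
abbrev Hmlgy (d : M →ₗ[R] M) :=
  LinearMap.ker d ⧸ (LinearMap.range d).comap (LinearMap.ker d).subtype

/-- Homology is invariant under conjugation by a linear equivalence. -/
noncomputable def Hcongr (dM : M →ₗ[R] M) (dN : N →ₗ[R] N) (e : M ≃ₗ[R] N)
    (hc : ∀ m, e (dM m) = dN (e m)) (hdM : dM ∘ₗ dM = 0) :
    Hmlgy dM ≃ₗ[R] Hmlgy dN := by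
  have hker : (LinearMap.ker dM).map (e : M →ₗ[R] N) = LinearMap.ker dN := by
    ext y
    simp only [Submodule.mem_map, LinearMap.mem_ker, LinearEquiv.coe_coe]
    constructor
    · rintro ⟨m, hm, rfl⟩
      rw [← hc, hm, map_zero]
    · intro hy
      refine ⟨e.symm y, ?_, by simp⟩
      have : e (dM (e.symm y)) = 0 := by rw [hc, e.apply_symm_apply, hy]
      exact e.injective (by simpa using this)
  let κ : LinearMap.ker dM ≃ₗ[R] LinearMap.ker dN :=
    (e.submoduleMap (LinearMap.ker dM)).trans (LinearEquiv.ofEq _ _ hker)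
  have hκ : ∀ u : LinearMap.ker dM, (κ u : N) = e (u : M) := fun u => rfl
  refine Submodule.Quotient.equiv _ _ κ ?_
  ext z
  simp only [Submodule.mem_map, Submodule.mem_comap, LinearMap.mem_range,
    Submodule.coe_subtype]
  constructor
  · rintro ⟨u, ⟨m, hm⟩, rfl⟩
    exact ⟨e m, by rw [LinearEquiv.coe_coe, hκ, ← hm, hc]⟩
  · rintro ⟨y, hy⟩
    have hmem : dM (e.symm y) ∈ LinearMap.ker dM := by
      rw [LinearMap.mem_ker, ← LinearMap.comp_apply, hdM, LinearMap.zero_apply]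
    refine ⟨⟨dM (e.symm y), hmem⟩, ⟨e.symm y, rfl⟩, ?_⟩
    apply Subtype.ext
    rw [LinearEquiv.coe_coe, hκ]
    simp only
    rw [hc, e.apply_symm_apply, hy]

/-- Homology of a differential module whose cycles are parametrized by `R`. -/
noncomputable def HofParam (d : M →ₗ[R] M) (v : R →ₗ[R] M) (hinj : Function.Injective v)
    (hker : LinearMap.range v = LinearMap.ker d) (I : Ideal R)
    (hrange : LinearMap.range d = Submodule.map v (I : Submodule R R)) :
    Hmlgy d ≃ₗ[R] R ⧸ I := by
  let e : R ≃ₗ[R] LinearMap.ker d :=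
    (LinearEquiv.ofInjective v hinj).trans (LinearEquiv.ofEq _ _ hker)
  have he : ∀ t : R, (e t : M) = v t := fun t => rfl
  refine (Submodule.Quotient.equiv I _ e ?_).symm
  ext z
  simp only [Submodule.mem_map, Submodule.mem_comap, Submodule.coe_subtype,
    hrange]
  constructor
  · rintro ⟨t, ht, rfl⟩
    exact ⟨t, ht, (he t).symm⟩
  · rintro ⟨t, ht, htz⟩
    exact ⟨t, ht, Subtype.ext (by rw [LinearEquiv.coe_coe, he, htz])⟩

/-- The cone of multiplication by `x` on a differential module. -/
noncomputable def coneD (x : R) (d : M →ₗ[R] M) : M × M →ₗ[R] M × M :=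
  LinearMap.prod (d ∘ₗ LinearMap.fst R M M + x • LinearMap.snd R M M)
    (-(d ∘ₗ LinearMap.snd R M M))

@[simp] lemma coneD_apply (x : R) (d : M →ₗ[R] M) (p : M × M) :
    coneD x d p = (d p.1 + x • p.2, -(d p.2)) := rfl

lemma coneD_sq (x : R) (d : M →ₗ[R] M) (hd : d ∘ₗ d = 0) :
    coneD x d ∘ₗ coneD x d = 0 := by
  have hdd : ∀ m, d (d m) = 0 := fun m => by
    have := LinearMap.congr_fun hd m; simpa using this
  ext p <;> simp [hdd, map_add, map_smul]

end Generic

section Cone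
variable {R : Type*} [CommRing R] {M : Type*} [AddCommGroup M] [Module R M]

set_option maxHeartbeats 1000000 in
/-- Homology of the cone of a regular element. -/
noncomputable def coneH (d : M →ₗ[R] M) (hd : d ∘ₗ d = 0) (x : R) (I : Ideal R)
    (hreg : ∀ a : R, x * a ∈ I → a ∈ I)
    (e : Hmlgy d ≃ₗ[R] R ⧸ I) :
    Hmlgy (coneD x d) ≃ₗ[R] R ⧸ (I ⊔ Ideal.span {x}) := by
  classical
  have hdd : ∀ m, d (d m) = 0 := fun m => by
    have := LinearMap.congr_fun hd m; simpa using this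
  set δ := coneD x d with hδ
  set B : Submodule R (LinearMap.ker d) :=
    (LinearMap.range d).comap (LinearMap.ker d).subtype with hB
  set B' : Submodule R (LinearMap.ker δ) :=
    (LinearMap.range δ).comap (LinearMap.ker δ).subtype with hB'
  set T : Submodule R (LinearMap.ker d) :=
    LinearMap.range (x • (LinearMap.id : LinearMap.ker d →ₗ[R] LinearMap.ker d)) with hT
  have hTmem : ∀ z : LinearMap.ker d, z ∈ T ↔ ∃ u : LinearMap.ker d, x • u = z := by
    intro z
    simp [hT, LinearMap.mem_range]
  -- the map a ↦ (a, 0) from cycles of d to cycles of δ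
  have hΦmem : ∀ u : LinearMap.ker d,
      ((LinearMap.inl R M M ∘ₗ (LinearMap.ker d).subtype) u) ∈ LinearMap.ker δ := by
    intro u
    have hu : d (u : M) = 0 := u.2
    simp [hδ, LinearMap.mem_ker, hu]
  set Φ : LinearMap.ker d →ₗ[R] LinearMap.ker δ :=
    LinearMap.codRestrict _ (LinearMap.inl R M M ∘ₗ (LinearMap.ker d).subtype) hΦmem with hΦ
  have hΦval : ∀ u : LinearMap.ker d, (Φ u : M × M) = ((u : M), 0) := fun u => rfl
  set q : LinearMap.ker d →ₗ[R] (LinearMap.ker δ ⧸ B') := B'.mkQ ∘ₗ Φ with hq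
  have hqval : ∀ u : LinearMap.ker d, q u = Submodule.Quotient.mk (Φ u) := fun u => rfl
  -- x kills nothing in the homology of d
  have hregH : ∀ h : Hmlgy d, x • h = 0 → h = 0 := by
    intro h hxh
    obtain ⟨a₀, ha₀⟩ := Submodule.Quotient.mk_surjective I (e h)
    have hx : x • e h = 0 := by rw [← map_smul, hxh, map_zero]
    rw [← ha₀, ← Submodule.Quotient.mk_smul, Submodule.Quotient.mk_eq_zero] at hx
    have hmem : x * a₀ ∈ I := by simpa [smul_eq_mul] using hx
    have h0 : e h = 0 := by
      rw [← ha₀]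
      exact (Submodule.Quotient.mk_eq_zero I).2 (hreg _ hmem)
    apply e.injective
    rw [h0, map_zero]
  -- q is surjective
  have hqsurj : Function.Surjective q := by
    intro h
    obtain ⟨⟨⟨a, b⟩, hab⟩, rfl⟩ := Submodule.Quotient.mk_surjective B' h
    have hab' : (d a + x • b, -(d b)) = ((0 : M), (0 : M)) := by
      have h1 : δ (a, b) = 0 := hab
      rw [hδ, coneD_apply] at h1
      exact h1
    have hdb : d b = 0 := by
      have := congrArg Prod.snd hab'
      simpa using this
    have hda : d a + x • b = 0 := congrArg Prod.fst hab'
    set zb : LinearMap.ker d := ⟨b, hdb⟩ with hzb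
    have hxb : x • (Submodule.Quotient.mk zb : Hmlgy d) = 0 := by
      rw [← Submodule.Quotient.mk_smul, Submodule.Quotient.mk_eq_zero]
      refine Submodule.mem_comap.2 ⟨-a, ?_⟩
      have hxbval : x • b = -(d a) := by linear_combination (norm := abel) hda
      show d (-a) = ((x • zb : LinearMap.ker d) : M)
      rw [map_neg, ← hxbval]
      rfl
    have hzb0 : (Submodule.Quotient.mk zb : Hmlgy d) = 0 := hregH _ hxb
    rw [Submodule.Quotient.mk_eq_zero] at hzb0
    obtain ⟨c, hc⟩ := Submodule.mem_comap.1 hzb0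
    have hc' : d c = b := hc
    have hzmem : a + x • c ∈ LinearMap.ker d := by
      rw [LinearMap.mem_ker, map_add, map_smul, hc']
      linear_combination (norm := abel) hda
    refine ⟨⟨a + x • c, hzmem⟩, ?_⟩
    rw [hqval, Submodule.Quotient.eq]
    refine Submodule.mem_comap.2 ⟨(0, c), ?_⟩
    show δ (0, c) = ((Φ ⟨a + x • c, hzmem⟩ : M × M) - ((a, b) : M × M))
    rw [hΦval, hδ, coneD_apply]
    simp only [map_zero, zero_add, hc']
    rw [Prod.mk_sub_mk, add_sub_cancel_left, zero_sub]
  -- kernel of q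
  have hkerq : LinearMap.ker q = B ⊔ T := by
    apply le_antisymm
    · intro u hu
      have hmem : Φ u ∈ B' := by
        rw [LinearMap.mem_ker, hqval, Submodule.Quotient.mk_eq_zero] at hu
        exact hu
      obtain ⟨⟨a', b'⟩, hab⟩ := Submodule.mem_comap.1 hmem
      have hab' : (d a' + x • b', -(d b')) = ((u : M), (0 : M)) := by
        have h1 : δ (a', b') = ((u : M), 0) := by rw [hab]; rfl
        rw [hδ, coneD_apply] at h1
        exact h1
      have hdb' : d b' = 0 := by
        have := congrArg Prod.snd hab'; simpa using this
      have hu' : d a' + x • b' = (u : M) := congrArg Prod.fst hab'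
      have hmem1 : d a' ∈ LinearMap.ker d := by simp [LinearMap.mem_ker, hdd]
      refine Submodule.mem_sup.2 ⟨⟨d a', hmem1⟩, ?_, x • ⟨b', hdb'⟩, ?_, ?_⟩
      · exact Submodule.mem_comap.2 ⟨a', rfl⟩
      · exact (hTmem _).2 ⟨⟨b', hdb'⟩, rfl⟩
      · apply Subtype.ext
        simpa using hu'
    · rw [sup_le_iff]
      constructor
      · intro u hu
        obtain ⟨a', ha'⟩ := Submodule.mem_comap.1 hu
        rw [LinearMap.mem_ker, hqval, Submodule.Quotient.mk_eq_zero]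
        refine Submodule.mem_comap.2 ⟨(a', 0), ?_⟩
        show δ (a', 0) = (Φ u : M × M)
        rw [hΦval, hδ, coneD_apply]
        have ha'' : d a' = (u : M) := ha'
        rw [ha'']
        simp
      · intro u hu
        obtain ⟨w, hw⟩ := (hTmem _).1 hu
        rw [LinearMap.mem_ker, hqval, Submodule.Quotient.mk_eq_zero]
        refine Submodule.mem_comap.2 ⟨(0, (w : M)), ?_⟩
        show δ (0, (w : M)) = (Φ u : M × M)
        rw [hΦval, hδ, coneD_apply]
        have hw' : d (w : M) = 0 := w.2
        have huval : (u : M) = x • (w : M) := by rw [← hw]; rfl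
        rw [hw', huval]
        simp
  -- assemble
  have equiv1 : (LinearMap.ker δ ⧸ B') ≃ₗ[R] (LinearMap.ker d ⧸ (B ⊔ T)) :=
    ((Submodule.quotEquivOfEq _ _ hkerq).symm.trans
      (LinearMap.quotKerEquivOfSurjective q hqsurj)).symm
  have equiv2 : (LinearMap.ker d ⧸ (B ⊔ T)) ≃ₗ[R] ((LinearMap.ker d ⧸ B) ⧸ T.map B.mkQ) :=
    (Submodule.quotientQuotientEquivQuotientSup B T).symm
  have hmap : (T.map B.mkQ).map (e : Hmlgy d →ₗ[R] R ⧸ I)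
      = Submodule.map I.mkQ (Ideal.span {x} : Submodule R R) := by
    ext z
    simp only [Submodule.mem_map, LinearEquiv.coe_coe]
    constructor
    · rintro ⟨y, ⟨t, ht, rfl⟩, rfl⟩
      obtain ⟨u, rfl⟩ := (hTmem _).1 ht
      obtain ⟨r, hr⟩ := Submodule.Quotient.mk_surjective I (e (Submodule.Quotient.mk u))
      refine ⟨x * r, Ideal.mem_span_singleton'.2 ⟨r, mul_comm r x⟩, ?_⟩
      have h1 : B.mkQ (x • u) = x • B.mkQ u := map_smul _ _ _
      rw [h1, map_smul, show B.mkQ u = (Submodule.Quotient.mk u : LinearMap.ker d ⧸ B) from rfl,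
        ← hr]
      show Submodule.Quotient.mk (x * r) = x • (Submodule.Quotient.mk r : R ⧸ I)
      rw [← smul_eq_mul, Submodule.Quotient.mk_smul]
    · rintro ⟨r, hr, rfl⟩
      obtain ⟨t, ht⟩ := Ideal.mem_span_singleton'.1 hr
      obtain ⟨w, hw⟩ := e.surjective (Submodule.Quotient.mk t)
      obtain ⟨u, rfl⟩ := Submodule.Quotient.mk_surjective B w
      refine ⟨Submodule.Quotient.mk (x • u), ⟨x • u, (hTmem _).2 ⟨u, rfl⟩, rfl⟩, ?_⟩
      rw [Submodule.Quotient.mk_smul, map_smul, hw]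
      show x • (Submodule.Quotient.mk t : R ⧸ I) = Submodule.Quotient.mk r
      rw [← Submodule.Quotient.mk_smul, smul_eq_mul, ← ht, mul_comm]
  have equiv3 : ((LinearMap.ker d ⧸ B) ⧸ T.map B.mkQ)
      ≃ₗ[R] ((R ⧸ I) ⧸ Submodule.map I.mkQ (Ideal.span {x} : Submodule R R)) :=
    Submodule.Quotient.equiv _ _ e hmap
  have equiv4 : ((R ⧸ I) ⧸ Submodule.map I.mkQ (Ideal.span {x} : Submodule R R))
      ≃ₗ[R] R ⧸ (I ⊔ Ideal.span {x}) :=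
    Submodule.quotientQuotientEquivQuotientSup I (Ideal.span {x})
  exact ((equiv1.trans equiv2).trans equiv3).trans equiv4

end Cone

section Base
variable {R : Type*} [CommRing R]

/-- The base differential: matrix `[[uv, -v²],[u², -uv]]`. -/
def baseD (u v : R) : (Fin 2 → R) →ₗ[R] (Fin 2 → R) where
  toFun f := ![u * v * f 0 - v ^ 2 * f 1, u ^ 2 * f 0 - u * v * f 1]
  map_add' f g := by
    funext i
    fin_cases i <;> simp [Matrix.cons_val_zero, Matrix.cons_val_one] <;> ring
  map_smul' c f := by
    funext i
    fin_cases i <;> simp [Matrix.cons_val_zero, Matrix.cons_val_one, smul_eq_mul] <;> ring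

@[simp] lemma baseD_apply (u v : R) (f : Fin 2 → R) :
    baseD u v f = ![u * v * f 0 - v ^ 2 * f 1, u ^ 2 * f 0 - u * v * f 1] := rfl

/-- Parametrization of cycles: `t ↦ (vt, ut)`. -/
def baseV (u v : R) : R →ₗ[R] (Fin 2 → R) where
  toFun t := ![v * t, u * t]
  map_add' s t := by funext i; fin_cases i <;> simp <;> ring
  map_smul' c t := by funext i; fin_cases i <;> simp [smul_eq_mul] <;> ring

@[simp] lemma baseV_apply (u v : R) (t : R) : baseV u v t = ![v * t, u * t] := rfl

lemma baseD_sq (u v : R) : baseD u v ∘ₗ baseD u v = 0 := by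
  apply LinearMap.ext
  intro f
  funext i
  fin_cases i <;>
    simp [Matrix.cons_val_zero, Matrix.cons_val_one] <;> ring

theorem baseH [IsDomain R] (u v : R) (hv : v ≠ 0)
    (hdvd : ∀ a b : R, u * a = v * b → ∃ t, a = v * t) :
    Nonempty (Hmlgy (baseD u v) ≃ₗ[R] R ⧸ Ideal.span {u, v}) := by
  have hinj : Function.Injective (baseV u v) := by
    intro s t hst
    have h0 : v * s = v * t := by
      have := congrFun hst 0
      simpa using this
    exact mul_left_cancel₀ hv h0
  have hker : LinearMap.range (baseV u v) = LinearMap.ker (baseD u v) := by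
    apply le_antisymm
    · rintro _ ⟨t, rfl⟩
      rw [LinearMap.mem_ker]
      funext i
      fin_cases i <;> simp <;> ring
    · intro f hf
      rw [LinearMap.mem_ker] at hf
      have h0 : u * v * f 0 - v ^ 2 * f 1 = 0 := by
        have := congrFun hf 0; simpa using this
      have h1 : u ^ 2 * f 0 - u * v * f 1 = 0 := by
        have := congrFun hf 1; simpa using this
      have huv : u * f 0 = v * f 1 := by
        have hv2 : v * (u * f 0 - v * f 1) = 0 := by ring_nf; linear_combination h0
        rcases mul_eq_zero.1 hv2 with h | h
        · exact absurd h hv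
        · linear_combination h
      obtain ⟨t, ht⟩ := hdvd (f 0) (f 1) huv
      have hf1 : f 1 = u * t := by
        have : v * (f 1) = v * (u * t) := by
          rw [← huv, ht]; ring
        exact mul_left_cancel₀ hv this
      refine ⟨t, ?_⟩
      funext i
      fin_cases i <;> simp [ht, hf1]
  have hrange : LinearMap.range (baseD u v)
      = Submodule.map (baseV u v) (Ideal.span {u, v} : Submodule R R) := by
    apply le_antisymm
    · rintro _ ⟨f, rfl⟩
      refine Submodule.mem_map.2 ⟨u * f 0 - v * f 1, ?_, ?_⟩
      · exact Ideal.mem_span_pair.2 ⟨f 0, -(f 1), by ring⟩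
      · funext i
        fin_cases i <;> simp <;> ring
    · rintro _ ⟨s, hs, rfl⟩
      obtain ⟨a, b, hab⟩ := Ideal.mem_span_pair.1 hs
      refine ⟨![a, -b], ?_⟩
      funext i
      fin_cases i <;> simp [← hab] <;> ring
  exact ⟨HofParam (baseD u v) (baseV u v) hinj hker _ hrange⟩

end Base

section Poly

lemma Xreg {n : ℕ} {k : Type} [Field k] {s : Set (Fin n)} {i : Fin n} (hi : i ∉ s)
    (a : MvPolynomial (Fin n) k)
    (h : X i * a ∈ Ideal.span (X '' s : Set (MvPolynomial (Fin n) k))) :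
    a ∈ Ideal.span (X '' s : Set (MvPolynomial (Fin n) k)) := by
  rw [mem_ideal_span_X_image] at h ⊢
  intro m hm
  have hmem : Finsupp.single i 1 + m ∈ (X i * a).support := by
    rw [support_X_mul]
    exact Finset.mem_map.2 ⟨m, hm, rfl⟩
  obtain ⟨j, hjs, hj⟩ := h _ hmem
  have hji : j ≠ i := fun hji => hi (hji ▸ hjs)
  refine ⟨j, hjs, ?_⟩
  simpa [Finsupp.add_apply, Finsupp.single_eq_of_ne' (Ne.symm hji)] using hj

end Poly

set_option maxHeartbeats 2000000 in
theorem stmt9' (k : Type) [Field k] (n : ℕ) (hn : 2 ≤ n) :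
    ∃ d : (Fin (2 ^ (n - 1)) → MvPolynomial (Fin n) k) →ₗ[MvPolynomial (Fin n) k]
        (Fin (2 ^ (n - 1)) → MvPolynomial (Fin n) k),
      d ∘ₗ d = 0 ∧
      Nonempty ((LinearMap.ker d ⧸ (LinearMap.range d).comap (LinearMap.ker d).subtype)
        ≃ₗ[MvPolynomial (Fin n) k]
        MvPolynomial (Fin n) k ⧸
          Ideal.span (Set.range (X : Fin n → MvPolynomial (Fin n) k))) := by
  classical
  have key : ∀ j, 2 ≤ j → j ≤ n →
      ∃ d : (Fin (2 ^ (j - 1)) → MvPolynomial (Fin n) k) →ₗ[MvPolynomial (Fin n) k]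
          (Fin (2 ^ (j - 1)) → MvPolynomial (Fin n) k),
        d ∘ₗ d = 0 ∧
        Nonempty (Hmlgy d ≃ₗ[MvPolynomial (Fin n) k]
          MvPolynomial (Fin n) k ⧸
            Ideal.span (X '' {i : Fin n | (i : ℕ) < j} :
              Set (MvPolynomial (Fin n) k))) := by
    intro j hj
    induction j, hj using Nat.le_induction with
    | base =>
      intro _
      have h0 : (0 : ℕ) < n := by omega
      have h1 : (1 : ℕ) < n := by omega
      set u : MvPolynomial (Fin n) k := X ⟨0, h0⟩ with hu
      set v : MvPolynomial (Fin n) k := X ⟨1, h1⟩ with hv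
      have hne : (⟨0, h0⟩ : Fin n) ∉ ({⟨1, h1⟩} : Set (Fin n)) := by
        simp [Fin.ext_iff]
      have hdvd : ∀ a b : MvPolynomial (Fin n) k, u * a = v * b → ∃ t, a = v * t := by
        intro a b hab
        have hmem : u * a ∈ Ideal.span
            (X '' ({⟨1, h1⟩} : Set (Fin n)) : Set (MvPolynomial (Fin n) k)) := by
          rw [Set.image_singleton]
          exact Ideal.mem_span_singleton'.2 ⟨b, by rw [mul_comm, hab]⟩
        have h2 := Xreg hne a hmem
        rw [Set.image_singleton] at h2
        obtain ⟨t, ht⟩ := Ideal.mem_span_singleton.1 h2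
        exact ⟨t, ht⟩
      obtain ⟨eq⟩ := baseH u v (X_ne_zero _) hdvd
      have hset : ({u, v} : Set (MvPolynomial (Fin n) k))
          = X '' {i : Fin n | (i : ℕ) < 2} := by
        ext p
        simp only [Set.mem_insert_iff, Set.mem_singleton_iff, Set.mem_image,
          Set.mem_setOf_eq, hu, hv]
        constructor
        · rintro (rfl | rfl)
          · exact ⟨⟨0, h0⟩, by show (0 : ℕ) < 2; omega, rfl⟩
          · exact ⟨⟨1, h1⟩, by show (1 : ℕ) < 2; omega, rfl⟩
        · rintro ⟨i, hi, rfl⟩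
          have : i = ⟨0, h0⟩ ∨ i = ⟨1, h1⟩ := by
            have hval : (i : ℕ) = 0 ∨ (i : ℕ) = 1 := by omega
            rcases hval with h | h
            · exact Or.inl (Fin.ext h)
            · exact Or.inr (Fin.ext h)
          rcases this with rfl | rfl
          · exact Or.inl rfl
          · exact Or.inr rfl
      exact ⟨baseD u v, baseD_sq u v,
        ⟨eq.trans (Submodule.quotEquivOfEq _ _ (by rw [hset]))⟩⟩
    | succ j hj ih =>
      intro hsucc
      have hjn : j ≤ n := by omega
      have hjlt : j < n := by omega
      obtain ⟨d, hd, ⟨e⟩⟩ := ih hjn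
      set x : MvPolynomial (Fin n) k := X ⟨j, hjlt⟩ with hx
      set I : Ideal (MvPolynomial (Fin n) k) :=
        Ideal.span (X '' {i : Fin n | (i : ℕ) < j} : Set (MvPolynomial (Fin n) k)) with hI
      have hreg : ∀ a : MvPolynomial (Fin n) k, x * a ∈ I → a ∈ I := by
        intro a ha
        exact Xreg (by simp) a ha
      have e2 := coneH d hd x I hreg e
      have hIsup : I ⊔ Ideal.span {x}
          = Ideal.span (X '' {i : Fin n | (i : ℕ) < j + 1} :
              Set (MvPolynomial (Fin n) k)) := by
        rw [hI, ← Ideal.span_union, ← Set.image_singleton (f := X) (a := (⟨j, hjlt⟩ : Fin n)),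
          ← Set.image_union]
        congr 1
        apply congrArg
        ext i
        simp only [Set.mem_union, Set.mem_setOf_eq, Set.mem_singleton_iff, Fin.ext_iff]
        omega
      have h2 : 2 ^ (j + 1 - 1) = 2 ^ (j - 1) + 2 ^ (j - 1) := by
        have hj1 : j + 1 - 1 = (j - 1) + 1 := by omega
        rw [hj1, pow_succ, mul_two]
      let ε : ((Fin (2 ^ (j - 1)) → MvPolynomial (Fin n) k)
            × (Fin (2 ^ (j - 1)) → MvPolynomial (Fin n) k))
          ≃ₗ[MvPolynomial (Fin n) k] (Fin (2 ^ (j + 1 - 1)) → MvPolynomial (Fin n) k) :=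
        (LinearEquiv.sumArrowLequivProdArrow (Fin (2 ^ (j - 1))) (Fin (2 ^ (j - 1)))
            (MvPolynomial (Fin n) k) (MvPolynomial (Fin n) k)).symm.trans
          (LinearEquiv.funCongrLeft (MvPolynomial (Fin n) k) (MvPolynomial (Fin n) k)
            ((finCongr h2).trans finSumFinEquiv.symm))
      have hdd : ∀ p, d (d p) = 0 := fun p => by
        simpa using LinearMap.congr_fun hd p
      refine ⟨ε.toLinearMap ∘ₗ (coneD x d) ∘ₗ ε.symm.toLinearMap, ?_, ?_⟩
      · apply LinearMap.ext
        intro m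
        simp [LinearMap.comp_apply, LinearEquiv.symm_apply_apply, hdd]
      · have hcomm : ∀ p, ε (coneD x d p)
            = (ε.toLinearMap ∘ₗ (coneD x d) ∘ₗ ε.symm.toLinearMap) (ε p) := by
          intro p
          simp [LinearMap.comp_apply, LinearEquiv.symm_apply_apply]
        have hcg := Hcongr (coneD x d)
          (ε.toLinearMap ∘ₗ (coneD x d) ∘ₗ ε.symm.toLinearMap) ε hcomm (coneD_sq x d hd)
        exact ⟨(hcg.symm.trans e2).trans (Submodule.quotEquivOfEq _ _ hIsup)⟩
  obtain ⟨d, hd, ⟨e⟩⟩ := key n hn le_rfl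
  have hrange : (X '' {i : Fin n | (i : ℕ) < n} : Set (MvPolynomial (Fin n) k))
      = Set.range (X : Fin n → MvPolynomial (Fin n) k) := by
    have huniv : {i : Fin n | (i : ℕ) < n} = Set.univ :=
      Set.eq_univ_of_forall fun i => i.isLt
    rw [huniv, Set.image_univ]
  exact ⟨d, hd, ⟨e.trans (Submodule.quotEquivOfEq _ _ (by rw [hrange]))⟩⟩

/-- for each `n ≥ 2` there is a free differential module of rank `2^(n−1)`
over `S = k[x₁,…,x_n]` whose homology `ker d ⧸ im d` is isomorphic to
`k = S/(x₁,…,x_n)`. -/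
theorem stmt9 (k : Type) [Field k] (n : ℕ) (hn : 2 ≤ n) :
    ∃ d : (Fin (2 ^ (n - 1)) → MvPolynomial (Fin n) k) →ₗ[MvPolynomial (Fin n) k]
        (Fin (2 ^ (n - 1)) → MvPolynomial (Fin n) k),
      d ∘ₗ d = 0 ∧
      Nonempty ((LinearMap.ker d ⧸ (LinearMap.range d).comap (LinearMap.ker d).subtype)
        ≃ₗ[MvPolynomial (Fin n) k]
        MvPolynomial (Fin n) k ⧸
          Ideal.span (Set.range (X : Fin n → MvPolynomial (Fin n) k))) := by
  exact stmt9' k n hn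
end

section
/- Let R be a commutative ring of characteristic 2 (or more generally any commutative ring), let T = ⋀•E be the exterior algebra on a finitely generated free R-module E, viewed as a graded module over its graded dual. Given elements fᵢ ∈ (⋀ⁱE)* for i ≥ 1 such that fᵢ·fⱼ = 0 whenever i and j are both even, define maps A_{i,j} : ⋀ⁱE → ⋀ʲE for j < i by A_{i,j} = (−1)^{ij} f_{i−j} (left contraction/multiplication). Then for all j < i, the relation Σ_{j < k < i} A_{k,j} ∘ A_{i,k} = 0 holds; equivalently, the map d = Σ A_{i,j} is a square-zero endomorphism of ⊕ᵢ ⋀ⁱE, so this data determines a differential module. -/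
private lemma sign_aux (j a b : ℕ) (h : Odd a ∨ Odd b) :
    ((-1 : ℤ) ^ ((j+a)*j + (j+a+b)*(j+a) + a*b)) =
      -((-1 : ℤ) ^ ((j+b)*j + (j+a+b)*(j+b))) := by
  set E1 := (j+a)*j + (j+a+b)*(j+a) + a*b with hE1
  set E2 := (j+b)*j + (j+a+b)*(j+b) with hE2
  have hodd : Odd (E1 + E2) := by
    have heq : E1 + E2 = (2*j+a+b)*(2*j+a+b) + a*b := by rw [hE1, hE2]; ring
    rw [heq]
    rcases Nat.even_or_odd a with ⟨m, rfl⟩ | ⟨m, rfl⟩ <;>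
      rcases Nat.even_or_odd b with ⟨n, rfl⟩ | ⟨n, rfl⟩
    · simp [Nat.odd_iff, Nat.even_iff] at h
      omega
    · exact ⟨2*(j+m+n)^2+2*(j+m+n)+2*m*n+m, by ring⟩
    · exact ⟨2*(j+m+n)^2+2*(j+m+n)+2*m*n+n, by ring⟩
    · exact ⟨2*(j+m+n+1)^2+2*m*n+m+n, by ring⟩
  have h1 : (-1 : ℤ) ^ E1 * (-1 : ℤ) ^ E2 = -1 := by
    rw [← pow_add]; exact Odd.neg_one_pow hodd
  have h2 : (-1 : ℤ) ^ E2 * (-1 : ℤ) ^ E2 = 1 := by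
    rw [← pow_add]; exact Even.neg_one_pow (Even.add_self _)
  calc (-1 : ℤ) ^ E1 = (-1 : ℤ) ^ E1 * ((-1 : ℤ) ^ E2 * (-1 : ℤ) ^ E2) := by rw [h2, mul_one]
    _ = ((-1 : ℤ) ^ E1 * (-1 : ℤ) ^ E2) * (-1 : ℤ) ^ E2 := by ring
    _ = -1 * (-1 : ℤ) ^ E2 := by rw [h1]
    _ = -((-1 : ℤ) ^ E2) := by ring

private lemma pair_aux {R D : Type*} [CommRing R] [AddCommGroup D] [Module R D]
    (f : ℕ → Module.End R D)
    (hcomm : ∀ a b : ℕ, f a * f b = ((-1 : ℤ) ^ (a * b)) • (f b * f a))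
    (heven : ∀ a b : ℕ, Even a → Even b → f a * f b = 0)
    (j a b : ℕ) :
    (((-1 : ℤ) ^ ((j+a)*j)) • f a) * (((-1 : ℤ) ^ ((j+a+b)*(j+a))) • f b)
      + (((-1 : ℤ) ^ ((j+b)*j)) • f b) * (((-1 : ℤ) ^ ((j+a+b)*(j+b))) • f a) = 0 := by
  rw [smul_mul_assoc, smul_mul_assoc, mul_smul_comm, mul_smul_comm, smul_smul, smul_smul,
    ← pow_add, ← pow_add]
  rcases Nat.even_or_odd a with ha | ha
  · rcases Nat.even_or_odd b with hb | hb
    · rw [heven a b ha hb, heven b a hb ha]; simp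
    · rw [hcomm a b, smul_smul, ← pow_add, sign_aux j a b (Or.inr hb), neg_smul, neg_add_cancel]
  · rw [hcomm a b, smul_smul, ← pow_add, sign_aux j a b (Or.inl ha), neg_smul, neg_add_cancel]

/-- let `T = ⋀•E` (abstracted here as a module `D` equipped with the
action of the graded-dual algebra: a family of commuting-up-to-sign operators
`f i` of degree `−i`, satisfying the relations that hold for multiplication by dual
exterior forms: graded commutativity `f a ∘ f b = (−1)^(ab) f b ∘ f a`, squares of odd
elements vanish, and — the hypothesis of the proposition — `f a ∘ f b = 0` whenever `a`
and `b` are both even).  Then the maps `A i j = (−1)^(ij) f (i−j)` satisfy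
`∑_{j<k<i} A k j ∘ A i k = 0` for all `j < i`; i.e. this data determines a
differential module. -/
theorem stmt11 {R D : Type*} [CommRing R] [AddCommGroup D] [Module R D]
    (f : ℕ → Module.End R D)
    (hcomm : ∀ a b : ℕ, f a * f b = ((-1 : ℤ) ^ (a * b)) • (f b * f a))
    (hodd : ∀ a : ℕ, Odd a → f a * f a = 0)
    (heven : ∀ a b : ℕ, Even a → Even b → f a * f b = 0) :
    ∀ i j : ℕ, j < i →
      ∑ k ∈ Finset.Ioo j i,
        ((((-1 : ℤ) ^ (k * j)) • f (k - j)) * (((-1 : ℤ) ^ (i * k)) • f (i - k))) = 0 := by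
  intro i j hij
  apply Finset.sum_involution (fun k _ => i + j - k)
  · intro k hk
    simp only [Finset.mem_Ioo] at hk
    obtain ⟨a, hka⟩ : ∃ a, k = j + a := ⟨k - j, by omega⟩
    obtain ⟨b, hib⟩ : ∃ b, i = j + a + b := ⟨i - k, by omega⟩
    subst hib
    subst hka
    have h1 : j + a + b + j - (j + a) = j + b := by omega
    have h2 : j + a - j = a := by omega
    have h3 : j + a + b - (j + a) = b := by omega
    have h4 : j + b - j = b := by omega
    have h5 : j + a + b - (j + b) = a := by omega
    rw [h1, h2, h3, h4, h5]
    exact pair_aux f hcomm heven j a b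
  · intro k hk hne
    simp only [Finset.mem_Ioo] at hk
    intro hfix
    apply hne
    have ha : k - j = i - k := by omega
    rw [ha, smul_mul_assoc, mul_smul_comm]
    rcases Nat.even_or_odd (i - k) with h | h
    · rw [heven _ _ h h]; simp
    · rw [hodd _ h]; simp
  · intro k hk
    simp only [Finset.mem_Ioo] at hk ⊢
    omega
  · intro k hk
    simp only [Finset.mem_Ioo] at hk
    omega
end

section
/- Let R = k[x₁,…,x₄] with k a field of characteristic ≠ 2, E = R⁴ with basis e₁,…,e₄, and define on ⋀•E the block maps A_{1,0} = A_{2,1} = A_{3,2} = A_{4,3} = contraction by x₁³e₁* + x₂³e₂* + x₃³e₃* + x₄³e₄*, A_{2,0} = −A_{3,1} = A_{4,2} = contraction by x₁x₂e₁₂* + x₂²e₃₄*, A_{3,0} = contraction by −2x₁e₁₃₄*, and A_{4,1} = A_{4,0} = 0. Then the resulting endomorphism of ⊕ᵢ⋀ⁱE squares to zero (so this data defines a free flag differential module), yet A_{3,0} ≠ A_{4,1}, so the flag is not of the form K(f₁,f₂,f₃,f₄) where each A_{i,j} = (−1)^{ij}f_{i−j} for a single choice of elements fᵢ ∈ (⋀ⁱE)*.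 -/
open MvPolynomial

namespace Stmt19

variable (k : Type) [Field k]

/-- `R = k[x₁,…,x₄]`. -/
abbrev R (k : Type) [Field k] := MvPolynomial (Fin 4) k

/-- `A_{1,0} = A_{2,1}† …`: the first Koszul matrix on `(x₁³, x₂³, x₃³, x₄³)`;
`⋀¹E → ⋀⁰E` in bases `(e₁,…,e₄)` and `(1)`. -/
noncomputable def A10 : Matrix (Fin 1) (Fin 4) (R k) :=
  !![X 0 ^ 3, X 1 ^ 3, X 2 ^ 3, X 3 ^ 3]

/-- `A_{2,1} : ⋀²E → ⋀¹E`, the second Koszul matrix, with `⋀²`-basis ordered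
`(e₁₂, e₁₃, e₁₄, e₂₃, e₂₄, e₃₄)`. -/
noncomputable def A21 : Matrix (Fin 4) (Fin 6) (R k) :=
  !![-X 1 ^ 3, -X 2 ^ 3, -X 3 ^ 3, 0,       0,       0;
     X 0 ^ 3,  0,        0,        -X 2 ^ 3, -X 3 ^ 3, 0;
     0,        X 0 ^ 3,  0,        X 1 ^ 3,  0,        -X 3 ^ 3;
     0,        0,        X 0 ^ 3,  0,        X 1 ^ 3,  X 2 ^ 3]

/-- `A_{3,2} : ⋀³E → ⋀²E`, the third Koszul matrix, with `⋀³`-basis ordered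
`(e₁₂₃, e₁₂₄, e₁₃₄, e₂₃₄)`. -/
noncomputable def A32 : Matrix (Fin 6) (Fin 4) (R k) :=
  !![X 2 ^ 3,  X 3 ^ 3,  0,        0;
     -X 1 ^ 3, 0,        X 3 ^ 3,  0;
     0,        -X 1 ^ 3, -X 2 ^ 3, 0;
     X 0 ^ 3,  0,        0,        X 3 ^ 3;
     0,        X 0 ^ 3,  0,        -X 2 ^ 3;
     0,        0,        X 0 ^ 3,  X 1 ^ 3]

/-- `A_{4,3} : ⋀⁴E → ⋀³E`, the last Koszul matrix. -/
noncomputable def A43 : Matrix (Fin 4) (Fin 1) (R k) :=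
  !![-X 3 ^ 3; X 2 ^ 3; -X 1 ^ 3; X 0 ^ 3]

/-- `A_{2,0}`, contraction by `x₁x₂·e₁₂* + x₂²·e₃₄*` on `⋀²E`. -/
noncomputable def A20 : Matrix (Fin 1) (Fin 6) (R k) :=
  !![X 0 * X 1, 0, 0, 0, 0, X 1 ^ 2]

/-- `A_{3,1} = −(contraction by x₁x₂·e₁₂* + x₂²·e₃₄*)` on `⋀³E`. -/
noncomputable def A31 : Matrix (Fin 4) (Fin 4) (R k) :=
  !![0,          0,          -X 1 ^ 2, 0;
     0,          0,          0,        -X 1 ^ 2;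
     -X 0 * X 1, 0,          0,        0;
     0,          -X 0 * X 1, 0,        0]

/-- `A_{4,2}`, contraction by `x₁x₂·e₁₂* + x₂²·e₃₄*` on `⋀⁴E`. -/
noncomputable def A42 : Matrix (Fin 6) (Fin 1) (R k) :=
  !![X 1 ^ 2; 0; 0; 0; 0; X 0 * X 1]

/-- `A_{3,0}`, given by `−2x₁·e₁₃₄*`. -/
noncomputable def A30 : Matrix (Fin 1) (Fin 4) (R k) :=
  !![0, 0, 2 * X 0, 0]

/-- `A_{4,1} = 0`. -/
noncomputable def A41 : Matrix (Fin 4) (Fin 1) (R k) := 0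

/-- `A_{4,0} = 0`. -/
noncomputable def A40 : Matrix (Fin 1) (Fin 1) (R k) := 0

/-- Contraction `⋀³E → ⋀⁰E` by an element `f₃ = Σ c_T e_T* ∈ (⋀³E)*`, with the
`⋀³`-basis ordered `(e₁₂₃, e₁₂₄, e₁₃₄, e₂₃₄)`. -/
noncomputable def contr3to0 (c : Fin 4 → R k) : Matrix (Fin 1) (Fin 4) (R k) :=
  !![c 0, c 1, c 2, c 3]

/-- Contraction `⋀⁴E → ⋀¹E` by the same element `f₃ = Σ c_T e_T*`:
`f₃ ⌟ e₁₂₃₄ = c₂₃₄ e₁ − c₁₃₄ e₂ + c₁₂₄ e₃ − c₁₂₃ e₄`. -/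
noncomputable def contr3to1 (c : Fin 4 → R k) : Matrix (Fin 4) (Fin 1) (R k) :=
  !![c 3; -c 2; c 1; -c 0]

lemma cons_val_five {α : Type*} {m : ℕ} (x : α) (u : Fin m.succ.succ.succ.succ.succ → α) :
    Matrix.vecCons x u 5 = u 4 := rfl

set_option maxHeartbeats 1000000 in
/-- over `R = k[x₁,…,x₄]` with `char k ≠ 2`, the block maps above define
a free flag differential module on `⋀•E` (the endomorphism squares to zero, i.e. all
relations `∑_{j<k<i} A_{k,j} A_{i,k} = 0` hold), yet there is no single element
`f₃ ∈ (⋀³E)*` whose contraction gives both `A_{3,0}` and `A_{4,1}`; so this flag is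
not of the Koszul form `K(f₁, f₂, f₃, f₄)`. -/
theorem stmt19 (hchar : (2 : k) ≠ 0) :
    (A10 k * A21 k = 0) ∧
    (A21 k * A32 k = 0) ∧
    (A32 k * A43 k = 0) ∧
    (A10 k * A31 k + A20 k * A32 k = 0) ∧
    (A21 k * A42 k + A31 k * A43 k = 0) ∧
    (A10 k * A41 k + A20 k * A42 k + A30 k * A43 k = 0) ∧
    ¬ ∃ c : Fin 4 → R k, A30 k = contr3to0 k c ∧ A41 k = contr3to1 k c := by
  refine ⟨?_, ?_, ?_, ?_, ?_, ?_, ?_⟩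
  · ext i j : 1
    fin_cases i <;> fin_cases j <;>
      simp [A10, A21, Matrix.mul_apply, Fin.sum_univ_succ, cons_val_five] <;> ring
  · ext i j : 1
    fin_cases i <;> fin_cases j <;>
      simp [A21, A32, Matrix.mul_apply, Fin.sum_univ_succ, cons_val_five] <;> ring
  · ext i j : 1
    fin_cases i <;> fin_cases j <;>
      simp [A32, A43, Matrix.mul_apply, Fin.sum_univ_succ, cons_val_five] <;> ring
  · ext i j : 1
    fin_cases i <;> fin_cases j <;>
      simp [A10, A31, A20, A32, Matrix.mul_apply, Fin.sum_univ_succ, cons_val_five] <;> ring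
  · ext i j : 1
    fin_cases i <;> fin_cases j <;>
      simp [A21, A42, A31, A43, Matrix.mul_apply, Fin.sum_univ_succ, cons_val_five] <;> ring
  · ext i j : 1
    fin_cases i <;> fin_cases j <;>
      simp [A10, A41, A20, A42, A30, A43, Matrix.mul_apply, Fin.sum_univ_succ, cons_val_five] <;> ring
  · rintro ⟨c, h1, h2⟩
    have hc2 : c 2 = 2 * X 0 := by
      have := congrFun (congrFun h1 0) 2
      simp [A30, contr3to0] at this
      exact this.symm
    have hc2' : -c 2 = 0 := by
      have := congrFun (congrFun h2 1) 0
      simp [A41, contr3to1] at this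
      simpa using this
    rw [hc2] at hc2'
    have h2R : (2 : R k) ≠ 0 := by
      have : ((C (2:k) : R k)) ≠ 0 := (MvPolynomial.C_ne_zero (σ := Fin 4)).mpr hchar
      simpa [map_ofNat] using this
    have hX : (X 0 : R k) ≠ 0 := MvPolynomial.X_ne_zero 0
    exact (mul_ne_zero h2R hX) (by simpa using hc2')

end Stmt19
end
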